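/- Let T ∈ B(H) and let H₀ = { x ∈ H : ‖(T*T + TT*)x‖ = ‖T*T + TT*‖·‖x‖ }. Suppose H₀ contains a unit vector. Then for all real α, β ≥ 0 with (α,β) ≠ (0,0), w(T)² ≥ (α/(α+β)) · sup{ |⟨Tx,x⟩|² : x ∈ H₀, ‖x‖ = 1 } + (β/(4(α+β))) · ‖T*T + TT*‖; in particular w(T)² ≥ (1/4)·‖T*T + TT*‖. -/

import Mathlib

open ContinuousLinearMap

variable {H : Type*} [NormedAddCommGroup H] [InnerProductSpace ℂ H] [CompleteSpace H]

/-- The numerical radius `w(T) = sup {|⟨Tx,x⟩| : ‖x‖ = 1}`. -/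
noncomputable def numRad (T : H →L[ℂ] H) : ℝ :=
  sSup {r : ℝ | ∃ x : H, ‖x‖ = 1 ∧ r = ‖(inner ℂ (T x) x : ℂ)‖}

/-- The `(α,β)`-norm `‖T‖_{α,β} = sup {√(α|⟨Tx,x⟩|² + β‖Tx‖²) : ‖x‖ = 1}`. -/
noncomputable def abNorm (α β : ℝ) (T : H →L[ℂ] H) : ℝ :=
  sSup {r : ℝ | ∃ x : H, ‖x‖ = 1 ∧
    r = Real.sqrt (α * ‖(inner ℂ (T x) x : ℂ)‖ ^ 2 + β * ‖T x‖ ^ 2)}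

lemma aux_selfadj_norm_le {A : H →L[ℂ] H} (hA : IsSelfAdjoint A) {M : ℝ} (hM : 0 ≤ M)
    (h : ∀ x : H, ‖(inner ℂ (A x) x : ℂ)‖ ≤ M * ‖x‖ ^ 2) : ‖A‖ ≤ M := by
  refine A.opNorm_le_bound hM fun x => ?_
  rcases eq_or_ne x 0 with rfl | hx
  · simp
  rcases eq_or_ne (A x) 0 with hAx | hAx
  · rw [hAx, norm_zero]; positivity
  have hxpos : (0:ℝ) < ‖x‖ := norm_pos_iff.mpr hx
  have hAxpos : (0:ℝ) < ‖A x‖ := norm_pos_iff.mpr hAx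
  set y : H := ((‖x‖ / ‖A x‖ : ℝ) : ℂ) • A x with hy
  have hyn : ‖y‖ = ‖x‖ := by
    rw [hy, norm_smul, Complex.norm_real, Real.norm_eq_abs,
      abs_of_nonneg (by positivity)]
    field_simp
  have hself : ∀ u v : H, (inner ℂ (A v) u : ℂ) = starRingEnd ℂ (inner ℂ (A u) v) := by
    intro u v
    rw [← hA.adjoint_eq, adjoint_inner_left, inner_conj_symm, hA.adjoint_eq]
  have expand : (inner ℂ (A (x+y)) (x+y) : ℂ) - inner ℂ (A (x-y)) (x-y)
      = 2 * ((inner ℂ (A x) y : ℂ) + inner ℂ (A y) x) := by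
    simp only [map_add, map_sub, inner_add_left, inner_add_right, inner_sub_left,
      inner_sub_right]
    ring
  have hne : ((‖A x‖ : ℝ) : ℂ) ≠ 0 := by exact_mod_cast hAxpos.ne'
  have hz : (inner ℂ (A x) y : ℂ) = ((‖x‖ * ‖A x‖ : ℝ) : ℂ) := by
    rw [hy, inner_smul_right, inner_self_eq_norm_sq_to_K]
    push_cast
    field_simp
    rfl
  have hzz : (inner ℂ (A x) y : ℂ) + inner ℂ (A y) x = ((2 * (‖x‖ * ‖A x‖) : ℝ) : ℂ) := by
    rw [hself x y, hz]
    rw [Complex.conj_ofReal]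
    push_cast; ring
  have hnorm4 : 4 * (‖x‖ * ‖A x‖)
      = ‖(inner ℂ (A (x+y)) (x+y) : ℂ) - inner ℂ (A (x-y)) (x-y)‖ := by
    rw [expand, hzz]
    rw [show (2 : ℂ) * ((2 * (‖x‖ * ‖A x‖) : ℝ) : ℂ) = ((4 * (‖x‖ * ‖A x‖) : ℝ) : ℂ) by
      push_cast; ring]
    rw [Complex.norm_real, Real.norm_eq_abs, abs_of_nonneg (by positivity)]
  have hpar : ‖x + y‖ ^ 2 + ‖x - y‖ ^ 2 = 2 * (‖x‖ ^ 2 + ‖y‖ ^ 2) := by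
    have := parallelogram_law_with_norm ℂ x y
    nlinarith [this]
  have hbound : 4 * (‖x‖ * ‖A x‖) ≤ M * ‖x + y‖ ^ 2 + M * ‖x - y‖ ^ 2 := by
    rw [hnorm4]
    calc ‖(inner ℂ (A (x+y)) (x+y) : ℂ) - inner ℂ (A (x-y)) (x-y)‖
        ≤ ‖(inner ℂ (A (x+y)) (x+y) : ℂ)‖ + ‖(inner ℂ (A (x-y)) (x-y) : ℂ)‖ := norm_sub_le _ _
      _ ≤ M * ‖x + y‖ ^ 2 + M * ‖x - y‖ ^ 2 := add_le_add (h _) (h _)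
  have h4 : 4 * (‖x‖ * ‖A x‖) ≤ 4 * (M * ‖x‖ ^ 2) := by
    rw [show M * ‖x + y‖ ^ 2 + M * ‖x - y‖ ^ 2 = M * (‖x + y‖ ^ 2 + ‖x - y‖ ^ 2) by ring,
      hpar, hyn] at hbound
    nlinarith
  nlinarith

lemma aux_numRad_bound (T : H →L[ℂ] H) (hbdd : BddAbove
    {r : ℝ | ∃ x : H, ‖x‖ = 1 ∧ r = ‖(inner ℂ (T x) x : ℂ)‖}) (x : H) :
    ‖(inner ℂ (T x) x : ℂ)‖ ≤ numRad T * ‖x‖ ^ 2 := by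
  rcases eq_or_ne x 0 with rfl | hx
  · simp
  have hxpos : (0:ℝ) < ‖x‖ := norm_pos_iff.mpr hx
  set u : H := ((‖x‖⁻¹ : ℝ) : ℂ) • x with hu
  have hun : ‖u‖ = 1 := by
    rw [hu, norm_smul, Complex.norm_real, Real.norm_eq_abs, abs_of_nonneg (by positivity)]
    field_simp
  have hmem : ‖(inner ℂ (T u) u : ℂ)‖ ∈
      {r : ℝ | ∃ x : H, ‖x‖ = 1 ∧ r = ‖(inner ℂ (T x) x : ℂ)‖} := ⟨u, hun, rfl⟩
  have hle : ‖(inner ℂ (T u) u : ℂ)‖ ≤ numRad T := le_csSup hbdd hmem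
  have hval : ‖(inner ℂ (T u) u : ℂ)‖ = ‖x‖⁻¹ ^ 2 * ‖(inner ℂ (T x) x : ℂ)‖ := by
    simp only [hu, map_smul, inner_smul_left, inner_smul_right]
    rw [norm_mul, norm_mul, RCLike.norm_conj, Complex.norm_real,
      Real.norm_eq_abs, abs_of_nonneg (by positivity)]
    ring
  rw [hval] at hle
  have h2 : ‖x‖⁻¹ ^ 2 * ‖(inner ℂ (T x) x : ℂ)‖ * ‖x‖ ^ 2 ≤ numRad T * ‖x‖ ^ 2 := by
    nlinarith [sq_nonneg ‖x‖]
  calc ‖(inner ℂ (T x) x : ℂ)‖ = ‖x‖⁻¹ ^ 2 * ‖(inner ℂ (T x) x : ℂ)‖ * ‖x‖ ^ 2 := by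
        field_simp
    _ ≤ numRad T * ‖x‖ ^ 2 := h2

set_option maxHeartbeats 1000000 in
/-- Refined lower bound for the numerical radius via the set `H₀` of vectors attaining
the norm of `T*T + TT*`. -/
theorem numRad_sq_ge_refined (T : H →L[ℂ] H)
    (h0 : ∃ x : H, ‖x‖ = 1 ∧
      ‖(adjoint T * T + T * adjoint T) x‖ = ‖adjoint T * T + T * adjoint T‖ * ‖x‖)
    (α β : ℝ) (hα : 0 ≤ α) (hβ : 0 ≤ β) (hαβ : (α, β) ≠ (0, 0)) :
    numRad T ^ 2 ≥ (α / (α + β)) *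
        sSup {r : ℝ | ∃ x : H, ‖x‖ = 1 ∧
          ‖(adjoint T * T + T * adjoint T) x‖ = ‖adjoint T * T + T * adjoint T‖ * ‖x‖ ∧
          r = ‖(inner ℂ (T x) x : ℂ)‖ ^ 2} +
        (β / (4 * (α + β))) * ‖adjoint T * T + T * adjoint T‖ ∧
      numRad T ^ 2 ≥ (1 / 4) * ‖adjoint T * T + T * adjoint T‖ := by
  obtain ⟨x₀, hx₀, hx₀N⟩ := h0
  set N : H →L[ℂ] H := adjoint T * T + T * adjoint T with hNdef
  -- boundedness of the numerical range set
  have hbdd : BddAbove {r : ℝ | ∃ x : H, ‖x‖ = 1 ∧ r = ‖(inner ℂ (T x) x : ℂ)‖} := by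
    refine ⟨‖T‖, ?_⟩
    rintro r ⟨x, hx, rfl⟩
    calc ‖(inner ℂ (T x) x : ℂ)‖ ≤ ‖T x‖ * ‖x‖ := norm_inner_le_norm _ _
      _ ≤ ‖T‖ * ‖x‖ * ‖x‖ := by
          have := T.le_opNorm x
          nlinarith [norm_nonneg x]
      _ = ‖T‖ := by rw [hx]; ring
  have hw0 : 0 ≤ numRad T :=
    le_trans (norm_nonneg _) (le_csSup hbdd ⟨x₀, hx₀, rfl⟩)
  have hwx : ∀ x : H, ‖(inner ℂ (T x) x : ℂ)‖ ≤ numRad T * ‖x‖ ^ 2 :=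
    aux_numRad_bound T hbdd
  -- real and imaginary parts of T
  set A : H →L[ℂ] H := (2⁻¹ : ℂ) • (T + adjoint T) with hAdef
  set B : H →L[ℂ] H := (-(Complex.I / 2)) • (T - adjoint T) with hBdef
  have hAsa : IsSelfAdjoint A := by
    rw [IsSelfAdjoint, hAdef, star_smul, star_add, star_eq_adjoint, star_eq_adjoint,
      adjoint_adjoint]
    rw [show star (2⁻¹ : ℂ) = (2⁻¹ : ℂ) by simp [Complex.star_def]]
    rw [add_comm]
  have hBsa : IsSelfAdjoint B := by
    rw [IsSelfAdjoint, hBdef, star_smul, star_sub, star_eq_adjoint, star_eq_adjoint,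
      adjoint_adjoint]
    rw [show star (-(Complex.I / 2)) = Complex.I / 2 by
      simp only [star_neg, star_div₀, Complex.star_def, Complex.conj_I, map_ofNat,
        neg_div, neg_neg]]
    rw [show adjoint T - T = -(T - adjoint T) by abel, smul_neg, ← neg_smul]
  -- pointwise bounds for A and B
  have hAx : ∀ x : H, ‖(inner ℂ (A x) x : ℂ)‖ ≤ numRad T * ‖x‖ ^ 2 := by
    intro x
    have : (inner ℂ (A x) x : ℂ) =
        2⁻¹ * ((inner ℂ (T x) x : ℂ) + inner ℂ (adjoint T x) x) := by
      simp only [hAdef, coe_smul', Pi.smul_apply, add_apply, inner_smul_left,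
        inner_add_left]
      rw [show starRingEnd ℂ (2⁻¹ : ℂ) = (2⁻¹ : ℂ) by rw [map_inv₀, map_ofNat]]
    rw [this]
    have hTad : ‖(inner ℂ (adjoint T x) x : ℂ)‖ = ‖(inner ℂ (T x) x : ℂ)‖ := by
      rw [adjoint_inner_left, ← inner_conj_symm]
      exact RCLike.norm_conj _
    calc ‖(2⁻¹ : ℂ) * ((inner ℂ (T x) x : ℂ) + inner ℂ (adjoint T x) x)‖
        ≤ 2⁻¹ * (‖(inner ℂ (T x) x : ℂ)‖ + ‖(inner ℂ (adjoint T x) x : ℂ)‖) := by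
          rw [norm_mul, show ‖(2⁻¹ : ℂ)‖ = 2⁻¹ by norm_num]
          have := norm_add_le (inner ℂ (T x) x : ℂ) (inner ℂ (adjoint T x) x : ℂ)
          linarith
      _ = ‖(inner ℂ (T x) x : ℂ)‖ := by rw [hTad]; ring
      _ ≤ numRad T * ‖x‖ ^ 2 := hwx x
  have hBx : ∀ x : H, ‖(inner ℂ (B x) x : ℂ)‖ ≤ numRad T * ‖x‖ ^ 2 := by
    intro x
    have : (inner ℂ (B x) x : ℂ) =
        (Complex.I / 2) * ((inner ℂ (T x) x : ℂ) - inner ℂ (adjoint T x) x) := by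
      simp only [hBdef, coe_smul', Pi.smul_apply, sub_apply, inner_smul_left,
        inner_sub_left]
      rw [show starRingEnd ℂ (-(Complex.I / 2)) = Complex.I / 2 by
        simp only [map_neg, map_div₀, Complex.conj_I, map_ofNat, neg_div, neg_neg]]
    rw [this]
    have hTad : ‖(inner ℂ (adjoint T x) x : ℂ)‖ = ‖(inner ℂ (T x) x : ℂ)‖ := by
      rw [adjoint_inner_left, ← inner_conj_symm]
      exact RCLike.norm_conj _
    calc ‖(Complex.I / 2) * ((inner ℂ (T x) x : ℂ) - inner ℂ (adjoint T x) x)‖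
        = 2⁻¹ * ‖(inner ℂ (T x) x : ℂ) - inner ℂ (adjoint T x) x‖ := by
          rw [norm_mul, norm_div, Complex.norm_I]
          norm_num
      _ ≤ 2⁻¹ * (‖(inner ℂ (T x) x : ℂ)‖ + ‖(inner ℂ (adjoint T x) x : ℂ)‖) := by
          have := norm_sub_le (inner ℂ (T x) x : ℂ) (inner ℂ (adjoint T x) x : ℂ)
          linarith
      _ = ‖(inner ℂ (T x) x : ℂ)‖ := by rw [hTad]; ring
      _ ≤ numRad T * ‖x‖ ^ 2 := hwx x
  have hAn : ‖A‖ ≤ numRad T := aux_selfadj_norm_le hAsa hw0 hAx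
  have hBn : ‖B‖ ≤ numRad T := aux_selfadj_norm_le hBsa hw0 hBx
  -- N is self-adjoint
  have hNsa : IsSelfAdjoint N := by
    rw [IsSelfAdjoint, hNdef, star_add, star_mul, star_mul, star_eq_adjoint, star_eq_adjoint,
      adjoint_adjoint]
  -- decomposition T x = A x + I • B x,  T* x = A x - I • B x
  have hIk : Complex.I * -(Complex.I / 2) = (2⁻¹ : ℂ) := by
    rw [mul_neg, ← mul_div_assoc, Complex.I_mul_I]
    norm_num
  have hdecT : ∀ x : H, T x = A x + Complex.I • B x := by
    intro x
    have hsum : A x + Complex.I • B x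
        = (2⁻¹ : ℂ) • (T x + adjoint T x) + (2⁻¹ : ℂ) • (T x - adjoint T x) := by
      simp only [hAdef, hBdef, coe_smul', Pi.smul_apply, add_apply, sub_apply, smul_smul, hIk]
    rw [hsum, smul_add, smul_sub]
    module
  have hdecTadj : ∀ x : H, adjoint T x = A x - Complex.I • B x := by
    intro x
    have hsum : A x - Complex.I • B x
        = (2⁻¹ : ℂ) • (T x + adjoint T x) - (2⁻¹ : ℂ) • (T x - adjoint T x) := by
      simp only [hAdef, hBdef, coe_smul', Pi.smul_apply, add_apply, sub_apply, smul_smul, hIk]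
    rw [hsum, smul_add, smul_sub]
    module
  -- pointwise bound for N
  have hNx : ∀ x : H, ‖(inner ℂ (N x) x : ℂ)‖ ≤ 4 * numRad T ^ 2 * ‖x‖ ^ 2 := by
    intro x
    have h1 : (inner ℂ ((adjoint T * T) x) x : ℂ) = ((‖T x‖ : ℂ) ^ 2) := by
      rw [ContinuousLinearMap.mul_apply, adjoint_inner_left, inner_self_eq_norm_sq_to_K]
      norm_cast
    have h2 : (inner ℂ ((T * adjoint T) x) x : ℂ) = ((‖adjoint T x‖ : ℂ) ^ 2) := by
      rw [ContinuousLinearMap.mul_apply, ← adjoint_inner_right, inner_self_eq_norm_sq_to_K]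
      norm_cast
    have hval : (inner ℂ (N x) x : ℂ) = ((‖T x‖ ^ 2 + ‖adjoint T x‖ ^ 2 : ℝ) : ℂ) := by
      rw [hNdef, add_apply, inner_add_left, h1, h2]
      push_cast
      ring
    rw [hval, Complex.norm_real, Real.norm_eq_abs, abs_of_nonneg (by positivity)]
    have hpar : ‖T x‖ ^ 2 + ‖adjoint T x‖ ^ 2 = 2 * (‖A x‖ ^ 2 + ‖B x‖ ^ 2) := by
      have hp := parallelogram_law_with_norm ℂ (A x) (Complex.I • B x)
      rw [← hdecT x, ← hdecTadj x] at hp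
      have hIB : ‖Complex.I • B x‖ = ‖B x‖ := by
        rw [norm_smul, Complex.norm_I, one_mul]
      rw [hIB] at hp
      linear_combination hp
    have hA2 : ‖A x‖ ≤ numRad T * ‖x‖ := by
      calc ‖A x‖ ≤ ‖A‖ * ‖x‖ := A.le_opNorm x
        _ ≤ numRad T * ‖x‖ := by nlinarith [norm_nonneg x]
    have hB2 : ‖B x‖ ≤ numRad T * ‖x‖ := by
      calc ‖B x‖ ≤ ‖B‖ * ‖x‖ := B.le_opNorm x
        _ ≤ numRad T * ‖x‖ := by nlinarith [norm_nonneg x]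
    nlinarith [norm_nonneg (A x), norm_nonneg (B x), norm_nonneg x]
  have hNle : ‖N‖ ≤ 4 * numRad T ^ 2 := aux_selfadj_norm_le hNsa (by positivity) hNx
  -- supremum over H₀
  have hS : sSup {r : ℝ | ∃ x : H, ‖x‖ = 1 ∧ ‖N x‖ = ‖N‖ * ‖x‖ ∧
      r = ‖(inner ℂ (T x) x : ℂ)‖ ^ 2} ≤ numRad T ^ 2 := by
    refine csSup_le ⟨_, x₀, hx₀, hx₀N, rfl⟩ ?_
    rintro r ⟨x, hx, -, rfl⟩
    have := hwx x
    rw [hx] at this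
    simp only [one_pow, mul_one] at this
    nlinarith [norm_nonneg (inner ℂ (T x) x : ℂ)]
  have hab : 0 < α + β := by
    rcases (add_nonneg hα hβ).eq_or_lt with h | h
    · exfalso
      apply hαβ
      have hα0 : α = 0 := by linarith
      have hβ0 : β = 0 := by linarith
      rw [hα0, hβ0]
    · exact h
  constructor
  · rw [ge_iff_le]
    set S := sSup {r : ℝ | ∃ x : H, ‖x‖ = 1 ∧ ‖N x‖ = ‖N‖ * ‖x‖ ∧
      r = ‖(inner ℂ (T x) x : ℂ)‖ ^ 2} with hSdef
    have hc1 : 0 ≤ α / (α + β) := div_nonneg hα hab.le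
    have hc2 : 0 ≤ β / (4 * (α + β)) := div_nonneg hβ (by linarith)
    calc α / (α + β) * S + β / (4 * (α + β)) * ‖N‖
        ≤ α / (α + β) * numRad T ^ 2 + β / (4 * (α + β)) * (4 * numRad T ^ 2) :=
          add_le_add (mul_le_mul_of_nonneg_left hS hc1)
            (mul_le_mul_of_nonneg_left hNle hc2)
      _ = numRad T ^ 2 := by field_simp
  · rw [ge_iff_le]
    linarith
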